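/- arXiv:2504.02410 — 3 statements merged into one kernel-verified Lean document; each statement's English description precedes it below -/
import Mathlib

section
/- Let λ be a partition and k ≥ 1 an integer. For every integer n ≥ |λ| + λ₁ the following exact identity holds: Σ_{i=0}^{k} (−1)^i · binom(k,i) · n^{−i} · p_{k+i}(λ[n]) = q_k(λ) + q₁(λ)^k + Σ_{i=1}^{k} (−1)^i · binom(k,i) · n^{−i} · ( q_{k+i}(λ) + q₁(λ)^{k+i} ). In particular, the left-hand side equals q_k(λ) + q₁(λ)^k plus a linear combination of q_{k+1}(λ),…,q_{2k}(λ) and q₁(λ)^{k+1},…,q₁(λ)^{2k} whose coefficients are of order O(n^{−1}), uniformly in λ. -/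
/-- The number of boxes `|λ|` of a partition, given as a function `ℕ → ℕ`
(0-indexed: `l i` is the part `λ_{i+1}`). -/
noncomputable def psize (l : ℕ → ℕ) : ℕ := ∑' i, l i

/-- `q_k(λ) = Σ_{i ≥ 1} ((λ_i − i)^k − (−i)^k)` (0-indexed function `l`). -/
noncomputable def qq (l : ℕ → ℕ) (k : ℕ) : ℝ :=
  ∑' i : ℕ, (((l i : ℝ) - ((i : ℝ) + 1)) ^ k - (-((i : ℝ) + 1)) ^ k)

/-- `p_k(λ) = Σ_{i ≥ 1} ((λ_i − (i−1))^k − (−(i−1))^k)` (0-indexed function `l`). -/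
noncomputable def pp (l : ℕ → ℕ) (k : ℕ) : ℝ :=
  ∑' i : ℕ, (((l i : ℝ) - (i : ℝ)) ^ k - (-(i : ℝ)) ^ k)

/-- The partition `λ[n] = (n − |λ|, λ₁, λ₂, …)`. -/
noncomputable def prepend (l : ℕ → ℕ) (n : ℕ) : ℕ → ℕ :=
  fun i => Nat.casesOn i (n - psize l) l

lemma tsum_ev_zero {f : ℕ → ℝ} (N : ℕ) (h : ∀ i, N ≤ i → f i = 0) :
    ∑' i, f i = ∑ i ∈ Finset.range N, f i := by
  apply tsum_eq_sum
  intro i hi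
  exact h i (by simpa using hi)

lemma qq_eq_sum (l : ℕ → ℕ) (m N : ℕ) (hN : ∀ i ≥ N, l i = 0) :
    qq l m = ∑ i ∈ Finset.range N,
      (((l i : ℝ) - ((i : ℝ) + 1)) ^ m - (-((i : ℝ) + 1)) ^ m) := by
  apply tsum_ev_zero
  intro i hi
  rw [hN i hi]
  simp [zero_sub]

lemma psize_eq_sum (l : ℕ → ℕ) (N : ℕ) (hN : ∀ i ≥ N, l i = 0) :
    psize l = ∑ i ∈ Finset.range N, l i := by
  apply tsum_eq_sum
  intro i hi
  exact hN i (by simpa using hi)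

lemma qq_one (l : ℕ → ℕ) (N : ℕ) (hN : ∀ i ≥ N, l i = 0) :
    qq l 1 = (psize l : ℝ) := by
  rw [qq_eq_sum l 1 N hN, psize_eq_sum l N hN]
  push_cast
  apply Finset.sum_congr rfl
  intro i _
  ring

lemma pp_prepend (l : ℕ → ℕ) (N : ℕ) (hN : ∀ i ≥ N, l i = 0)
    (n m : ℕ) (hm : 1 ≤ m) (hle : psize l ≤ n) :
    pp (prepend l n) m = ((n : ℝ) - (psize l : ℝ)) ^ m + qq l m := by
  have hsumm : Summable (fun i : ℕ =>
      (((prepend l n i : ℝ) - (i : ℝ)) ^ m - (-(i : ℝ)) ^ m)) := by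
    apply summable_of_ne_finset_zero (s := Finset.range (N + 1))
    intro i hi
    simp only [Finset.mem_range, not_lt] at hi
    cases i with
    | zero => omega
    | succ j =>
      have : prepend l n (j + 1) = l j := rfl
      rw [this, hN j (by omega)]
      simp [zero_sub]
  rw [pp, Summable.tsum_eq_zero_add hsumm]
  have h0 : (((prepend l n 0 : ℝ) - (0 : ℕ)) ^ m - (-((0 : ℕ) : ℝ)) ^ m)
      = ((n : ℝ) - (psize l : ℝ)) ^ m := by
    have : prepend l n 0 = n - psize l := rfl
    rw [this, Nat.cast_sub hle]
    simp [zero_pow (by omega : m ≠ 0)]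
  rw [h0]
  congr 1
  rw [qq]
  apply tsum_congr
  intro i
  have : prepend l n (i + 1) = l i := rfl
  rw [this]
  push_cast
  ring_nf

lemma binom_sum (k : ℕ) (a x : ℝ) (ha : a ≠ 0) :
    ∑ i ∈ Finset.range (k + 1), (-1 : ℝ) ^ i * (k.choose i : ℝ) * (a ^ i)⁻¹ * x ^ (k + i)
      = x ^ k * ((a - x) / a) ^ k := by
  have h : ((a - x) / a) ^ k = (1 - x / a) ^ k := by rw [sub_div, div_self ha]
  rw [h, show (1 : ℝ) - x / a = -(x / a) + 1 by ring, add_pow, Finset.mul_sum]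
  apply Finset.sum_congr rfl
  intro i _
  have h2 : (-(x / a)) ^ i = (-1) ^ i * (x ^ i * (a ^ i)⁻¹) := by
    rw [neg_pow, div_pow, div_eq_mul_inv]
  rw [h2, one_pow, pow_add]
  ring

theorem stmt0 (l : ℕ → ℕ) (hanti : Antitone l) (hfin : ∃ N, ∀ i ≥ N, l i = 0)
    (k : ℕ) (hk : 1 ≤ k) (n : ℕ) (hn : psize l + l 0 ≤ n) :
    ∑ i ∈ Finset.range (k + 1),
        (-1 : ℝ) ^ i * (k.choose i : ℝ) * ((n : ℝ) ^ i)⁻¹ * pp (prepend l n) (k + i)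
      = qq l k + (qq l 1) ^ k
        + ∑ i ∈ Finset.Icc 1 k,
            (-1 : ℝ) ^ i * (k.choose i : ℝ) * ((n : ℝ) ^ i)⁻¹ *
              (qq l (k + i) + (qq l 1) ^ (k + i)) := by
  obtain ⟨N, hN⟩ := hfin
  have hle : psize l ≤ n := le_trans (Nat.le_add_right _ _) hn
  rcases Nat.eq_zero_or_pos n with hn0 | hnpos
  · -- degenerate case n = 0 : everything is zero
    subst hn0
    have hl0 : l 0 = 0 := by omega
    have hlz : ∀ i, l i = 0 := fun i =>
      Nat.le_zero.mp (hl0 ▸ hanti (Nat.zero_le i))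
    have hps : psize l = 0 := by
      rw [psize_eq_sum l N hN]
      simp [hlz]
    have hqq : ∀ m, qq l m = 0 := by
      intro m
      rw [qq_eq_sum l m N hN]
      apply Finset.sum_eq_zero
      intro i _
      rw [hlz i]
      simp [zero_sub]
    have hpp : ∀ m, 1 ≤ m → pp (prepend l 0) m = 0 := by
      intro m hm
      rw [pp_prepend l N hN 0 m hm hle, hqq m, hps]
      simp [zero_pow (by omega : m ≠ 0)]
    rw [hqq k]
    rw [Finset.sum_eq_zero (fun i _ => by rw [hpp (k + i) (by omega)]; ring)]
    rw [Finset.sum_eq_zero fun i hi => by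
      rw [hqq (k + i), qq_one l N hN, hps]
      simp [zero_pow (by omega : k + i ≠ 0)]]
    rw [qq_one l N hN, hps]
    simp [zero_pow (by omega : k ≠ 0)]
  · have ha : (n : ℝ) ≠ 0 := Nat.cast_ne_zero.mpr (by omega)
    have hQ1 : qq l 1 = (psize l : ℝ) := qq_one l N hN
    set s : ℝ := (psize l : ℝ) with hs
    have hpp : ∀ i ∈ Finset.range (k + 1),
        (-1 : ℝ) ^ i * (k.choose i : ℝ) * ((n : ℝ) ^ i)⁻¹ * pp (prepend l n) (k + i)
        = (-1 : ℝ) ^ i * (k.choose i : ℝ) * ((n : ℝ) ^ i)⁻¹ *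
            (((n : ℝ) - s) ^ (k + i) + qq l (k + i)) := by
      intro i _
      rw [pp_prepend l N hN n (k + i) (by omega) hle]
    rw [Finset.sum_congr rfl hpp, hQ1]
    have split : ∀ g : ℕ → ℝ, ∑ i ∈ Finset.range (k + 1), g i
        = g 0 + ∑ i ∈ Finset.Icc 1 k, g i := by
      intro g
      rw [Finset.range_eq_Ico, Finset.sum_eq_sum_Ico_succ_bot (by omega),
        Finset.Ico_add_one_right_eq_Icc]
    have key : ∑ i ∈ Finset.range (k + 1),
        (-1 : ℝ) ^ i * (k.choose i : ℝ) * ((n : ℝ) ^ i)⁻¹ * ((n : ℝ) - s) ^ (k + i)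
        = ∑ i ∈ Finset.range (k + 1),
        (-1 : ℝ) ^ i * (k.choose i : ℝ) * ((n : ℝ) ^ i)⁻¹ * s ^ (k + i) := by
      rw [binom_sum k (n : ℝ) ((n : ℝ) - s) ha, binom_sum k (n : ℝ) s ha]
      rw [show (n:ℝ) - ((n:ℝ) - s) = s by ring, div_pow, div_pow]
      ring
    calc ∑ i ∈ Finset.range (k + 1),
        (-1 : ℝ) ^ i * (k.choose i : ℝ) * ((n : ℝ) ^ i)⁻¹ *
          (((n : ℝ) - s) ^ (k + i) + qq l (k + i))
        = ∑ i ∈ Finset.range (k + 1),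
            (-1 : ℝ) ^ i * (k.choose i : ℝ) * ((n : ℝ) ^ i)⁻¹ * ((n : ℝ) - s) ^ (k + i)
          + ∑ i ∈ Finset.range (k + 1),
            (-1 : ℝ) ^ i * (k.choose i : ℝ) * ((n : ℝ) ^ i)⁻¹ * qq l (k + i) := by
          rw [← Finset.sum_add_distrib]
          apply Finset.sum_congr rfl
          intro i _
          ring
      _ = ∑ i ∈ Finset.range (k + 1),
            (-1 : ℝ) ^ i * (k.choose i : ℝ) * ((n : ℝ) ^ i)⁻¹ *
              (qq l (k + i) + s ^ (k + i)) := by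
          rw [key, ← Finset.sum_add_distrib]
          apply Finset.sum_congr rfl
          intro i _
          ring
      _ = qq l k + s ^ k + ∑ i ∈ Finset.Icc 1 k,
            (-1 : ℝ) ^ i * (k.choose i : ℝ) * ((n : ℝ) ^ i)⁻¹ *
              (qq l (k + i) + s ^ (k + i)) := by
          rw [split]
          norm_num
end

section
/- For every n ≥ 1, the submonoid of the multiplicative monoid of n×n integer matrices generated by the n×n permutation matrices together with the idempotents ε₁,…,ε_n equals Γ(n). -/
/-- `Γ(n)` (with integer entries): n×n matrices with entries in {0,1} such that
each row and each column contains at most one entry equal to 1. -/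
def IsGammaMatrixZ {n : ℕ} (γ : Matrix (Fin n) (Fin n) ℤ) : Prop :=
  (∀ i j, γ i j = 0 ∨ γ i j = 1) ∧
  (∀ i, {j | γ i j = 1}.Subsingleton) ∧
  (∀ j, {i | γ i j = 1}.Subsingleton)

lemma gamma_mul_apply {n : ℕ} {A B : Matrix (Fin n) (Fin n) ℤ}
    (hA : IsGammaMatrixZ A) (hB : IsGammaMatrixZ B) (i j : Fin n) :
    (A * B) i j = if ∃ k, A i k = 1 ∧ B k j = 1 then 1 else 0 := by
  classical
  rw [Matrix.mul_apply]
  have key : ∀ k, A i k * B k j = if (A i k = 1 ∧ B k j = 1) then 1 else 0 := by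
    intro k
    rcases hA.1 i k with h | h <;> rcases hB.1 k j with h' | h' <;> simp [h, h']
  simp_rw [key]
  rw [Finset.sum_boole]
  by_cases h : ∃ k, A i k = 1 ∧ B k j = 1
  · obtain ⟨k, hk⟩ := h
    have hfil : Finset.univ.filter (fun k => A i k = 1 ∧ B k j = 1) = {k} := by
      ext m
      simp only [Finset.mem_filter, Finset.mem_univ, true_and, Finset.mem_singleton]
      constructor
      · rintro ⟨h1, _⟩; exact hA.2.1 i h1 hk.1
      · rintro rfl; exact hk
    rw [if_pos (⟨k, hk⟩ : ∃ k, A i k = 1 ∧ B k j = 1)]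
    simp [hfil]
  · have hfil : Finset.univ.filter (fun k => A i k = 1 ∧ B k j = 1) = ∅ := by
      ext m
      simp only [Finset.mem_filter, Finset.mem_univ, true_and, Finset.notMem_empty,
        iff_false]
      exact fun hm => h ⟨m, hm⟩
    simp [hfil, if_neg h]

lemma gamma_mul_eq_one {n : ℕ} {A B : Matrix (Fin n) (Fin n) ℤ}
    (hA : IsGammaMatrixZ A) (hB : IsGammaMatrixZ B) (i j : Fin n) :
    (A * B) i j = 1 ↔ ∃ k, A i k = 1 ∧ B k j = 1 := by
  rw [gamma_mul_apply hA hB]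
  split <;> simp_all

lemma gamma_mul {n : ℕ} {A B : Matrix (Fin n) (Fin n) ℤ}
    (hA : IsGammaMatrixZ A) (hB : IsGammaMatrixZ B) : IsGammaMatrixZ (A * B) := by
  refine ⟨fun i j => ?_, fun i x hx y hy => ?_, fun j x hx y hy => ?_⟩
  · rw [gamma_mul_apply hA hB]; split <;> simp
  · rw [Set.mem_setOf_eq, gamma_mul_eq_one hA hB] at hx hy
    obtain ⟨k, hk1, hk2⟩ := hx
    obtain ⟨k', hk1', hk2'⟩ := hy
    have : k = k' := hA.2.1 i hk1 hk1'
    subst this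
    exact hB.2.1 k hk2 hk2'
  · rw [Set.mem_setOf_eq, gamma_mul_eq_one hA hB] at hx hy
    obtain ⟨k, hk1, hk2⟩ := hx
    obtain ⟨k', hk1', hk2'⟩ := hy
    have : k = k' := hB.2.2 j hk2 hk2'
    subst this
    exact hA.2.2 k hk1 hk1'

lemma gamma_perm {n : ℕ} (π : Equiv.Perm (Fin n)) :
    IsGammaMatrixZ (Matrix.of fun i j => if π j = i then (1 : ℤ) else 0) := by
  refine ⟨fun i j => ?_, fun i x hx y hy => ?_, fun j x hx y hy => ?_⟩
  · by_cases h : π j = i <;> simp [h]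
  · simp only [Set.mem_setOf_eq, Matrix.of_apply] at hx hy
    have hx' : π x = i := by by_contra h; simpa [h] using hx
    have hy' : π y = i := by by_contra h; simpa [h] using hy
    exact π.injective (hx'.trans hy'.symm)
  · simp only [Set.mem_setOf_eq, Matrix.of_apply] at hx hy
    have hx' : π j = x := by by_contra h; simpa [h] using hx
    have hy' : π j = y := by by_contra h; simpa [h] using hy
    exact hx'.symm.trans hy'

lemma gamma_eps {n : ℕ} (a : Fin n) :
    IsGammaMatrixZ (Matrix.diagonal fun j => if j = a then (0 : ℤ) else 1) := by
  refine ⟨fun i j => ?_, fun i x hx y hy => ?_, fun j x hx y hy => ?_⟩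
  · by_cases h : i = j
    · subst h; by_cases h' : i = a <;> simp [Matrix.diagonal_apply_eq, h']
    · simp [Matrix.diagonal_apply_ne _ h]
  · simp only [Set.mem_setOf_eq] at hx hy
    have hx' : i = x := by
      by_contra h; rw [Matrix.diagonal_apply_ne _ h] at hx; norm_num at hx
    have hy' : i = y := by
      by_contra h; rw [Matrix.diagonal_apply_ne _ h] at hy; norm_num at hy
    exact hx'.symm.trans hy'
  · simp only [Set.mem_setOf_eq] at hx hy
    have hx' : x = j := by
      by_contra h; rw [Matrix.diagonal_apply_ne _ h] at hx; norm_num at hx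
    have hy' : y = j := by
      by_contra h; rw [Matrix.diagonal_apply_ne _ h] at hy; norm_num at hy
    exact hx'.trans hy'.symm

def gens (n : ℕ) : Set (Matrix (Fin n) (Fin n) ℤ) :=
  {M | ∃ π : Equiv.Perm (Fin n),
      M = Matrix.of fun i j => if π j = i then (1 : ℤ) else 0} ∪
  {M | ∃ i : Fin n,
      M = Matrix.diagonal fun j => if j = i then (0 : ℤ) else 1}

lemma diag_mem {n : ℕ} (S : Finset (Fin n)) :
    (Matrix.diagonal fun j => if j ∈ S then (0 : ℤ) else 1) ∈
      Submonoid.closure (gens n) := by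
  classical
  induction S using Finset.induction_on with
  | empty =>
      have : (Matrix.diagonal fun j : Fin n => if j ∈ (∅ : Finset (Fin n)) then (0 : ℤ) else 1)
          = 1 := by
        simp [Matrix.diagonal_one]
      rw [this]; exact one_mem _
  | @insert a S ha ih =>
      have heq : (Matrix.diagonal fun j => if j ∈ insert a S then (0 : ℤ) else 1) =
          (Matrix.diagonal fun j => if j = a then (0 : ℤ) else 1) *
          (Matrix.diagonal fun j => if j ∈ S then (0 : ℤ) else 1) := by
        have hfun : (fun j => if j ∈ insert a S then (0 : ℤ) else 1) =
            fun j => (if j = a then (0 : ℤ) else 1) * (if j ∈ S then (0 : ℤ) else 1) := by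
          funext j
          by_cases h1 : j = a <;> by_cases h2 : j ∈ S <;> simp [h1, h2]
        rw [Matrix.diagonal_mul_diagonal, hfun]
      rw [heq]
      exact mul_mem (Submonoid.subset_closure (Or.inr ⟨a, rfl⟩)) ih

/-- The submonoid of n×n integer matrices generated by the permutation matrices
together with the idempotents ε₁, …, ε_n equals `Γ(n)` (as a set of matrices). -/
theorem stmt5 (n : ℕ) (hn : 1 ≤ n) :
    (Submonoid.closure
        ({M | ∃ π : Equiv.Perm (Fin n),
            M = Matrix.of fun i j => if π j = i then (1 : ℤ) else 0} ∪
         {M | ∃ i : Fin n,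
            M = Matrix.diagonal fun j => if j = i then (0 : ℤ) else 1}) :
        Submonoid (Matrix (Fin n) (Fin n) ℤ)) =
      {γ : Matrix (Fin n) (Fin n) ℤ | IsGammaMatrixZ γ} := by
  classical
  have hone : IsGammaMatrixZ (1 : Matrix (Fin n) (Fin n) ℤ) := by
    have := gamma_perm (n := n) 1
    convert this using 1; ext i j; simp [Matrix.one_apply, eq_comm]
  apply le_antisymm
  · -- closure ⊆ Γ
    intro M hM
    induction hM using Submonoid.closure_induction with
    | mem M hM =>
        rcases hM with ⟨π, rfl⟩ | ⟨a, rfl⟩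
        · exact gamma_perm π
        · exact gamma_eps a
    | one => exact hone
    | mul A B _ _ hA hB => exact gamma_mul hA hB
  · -- Γ ⊆ closure
    intro γ hγ
    obtain ⟨h01, hrow, hcol⟩ := hγ
    set D : Fin n → Prop := fun j => ∃ i, γ i j = 1 with hD
    set R : Fin n → Prop := fun i => ∃ j, γ i j = 1 with hR
    -- the bijection between used columns and used rows
    let f : {j // D j} → {i // R i} := fun j =>
      ⟨Classical.choose j.2, ⟨j.1, Classical.choose_spec j.2⟩⟩
    have hf : ∀ j : {j // D j}, γ (f j).1 j.1 = 1 := fun j => Classical.choose_spec j.2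
    have finj : Function.Injective f := by
      intro x y hxy
      have h1 : γ (f x).1 x.1 = 1 := hf x
      have h2 : γ (f x).1 y.1 = 1 := by rw [hxy]; exact hf y
      exact Subtype.ext (hrow (f x).1 h1 h2)
    have fsurj : Function.Surjective f := by
      rintro ⟨i, j, hij⟩
      refine ⟨⟨j, ⟨i, hij⟩⟩, ?_⟩
      exact Subtype.ext (hcol j (hf ⟨j, ⟨i, hij⟩⟩) hij)
    let g : {j // D j} ≃ {i // R i} := Equiv.ofBijective f ⟨finj, fsurj⟩
    have hcard : Fintype.card {j // ¬ D j} = Fintype.card {i // ¬ R i} := by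
      rw [Fintype.card_subtype_compl, Fintype.card_subtype_compl,
        Fintype.card_congr g]
    let h : {j // ¬ D j} ≃ {i // ¬ R i} := Fintype.equivOfCardEq hcard
    let π : Equiv.Perm (Fin n) :=
      ((Equiv.sumCompl D).symm.trans ((g.sumCongr h).trans (Equiv.sumCompl R)))
    have hπ : ∀ i j, γ i j = 1 → π j = i := by
      intro i j hij
      have hDj : D j := ⟨i, hij⟩
      have : π j = (g ⟨j, hDj⟩).1 := by
        simp only [π, Equiv.trans_apply, Equiv.sumCompl_symm_apply_of_pos hDj,
          Equiv.sumCongr_apply, Sum.map_inl, Equiv.sumCompl_apply_inl]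
      rw [this]
      exact hcol j (hf ⟨j, hDj⟩) hij
    have hπR : ∀ j, R (π j) → D j := by
      intro j hRj
      by_contra hDj
      have : π j = (h ⟨j, hDj⟩).1 := by
        simp only [π, Equiv.trans_apply, Equiv.sumCompl_symm_apply_of_neg hDj,
          Equiv.sumCongr_apply, Sum.map_inr, Equiv.sumCompl_apply_inr]
      rw [this] at hRj
      exact (h ⟨j, hDj⟩).2 hRj
    set S : Finset (Fin n) := Finset.univ.filter (fun i => ¬ R i) with hS
    have hdecomp : γ = (Matrix.diagonal fun i => if i ∈ S then (0 : ℤ) else 1) *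
        (Matrix.of fun i j => if π j = i then (1 : ℤ) else 0) := by
      ext i j
      rw [Matrix.diagonal_mul]
      simp only [Matrix.of_apply, hS, Finset.mem_filter, Finset.mem_univ, true_and,
        not_not]
      rcases h01 i j with h0 | h1
      · rw [h0]
        by_cases hRi : R i
        · by_cases hπj : π j = i
          · exfalso
            obtain ⟨j', hj'⟩ := hRi
            have : π j' = i := hπ i j' hj'
            have : j' = j := π.injective (by rw [this, hπj])
            subst this
            rw [hj'] at h0; norm_num at h0
          · simp [hπj]
        · simp [hRi]
      · rw [h1]
        have hRi : R i := ⟨j, h1⟩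
        have hπj : π j = i := hπ i j h1
        simp [hRi, hπj]
    rw [hdecomp]
    have hmem1 := diag_mem (n := n) S
    have hmem2 : (Matrix.of fun i j => if π j = i then (1 : ℤ) else 0) ∈
        Submonoid.closure (gens n) := Submonoid.subset_closure (Or.inl ⟨π, rfl⟩)
    exact mul_mem hmem1 hmem2
end

section
/- Fix ℓ ≥ 1 and n ≥ 0, and let f ∈ H = ℓ²(X). Then U(g)f = f for every finitary permutation g of ℕ fixing each of the points 1,…,n if and only if f(ω) = 0 for every ω ∈ X whose range is not contained in {1,…,n}. (A permutation of ℕ is finitary if it moves only finitely many points.) -/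
/-- `X`: the set of injective maps `ω : {1,…,ℓ} → ℕ` (where `ℕ = {1,2,3,…}`,
modelled by `ℕ+`). -/
def Xinj (ℓ : ℕ) : Type := {ω : Fin ℓ → ℕ+ // Function.Injective ω}

theorem stmt16 (ℓ : ℕ) (hℓ : 1 ≤ ℓ) (n : ℕ)
    (f : lp (fun _ : Xinj ℓ => ℂ) 2) :
    (∀ g : Equiv.Perm ℕ+,
        {x : ℕ+ | g x ≠ x}.Finite →
        (∀ j : ℕ+, (j : ℕ) ≤ n → g j = j) →
        -- `U(g) f = f`, where `(U(g)f)(ω) = f(g⁻¹ ∘ ω)`: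
        ∀ ω : Xinj ℓ,
          f ⟨fun a => g⁻¹ (ω.1 a), (Equiv.injective g⁻¹).comp ω.2⟩ = f ω)
      ↔
    (∀ ω : Xinj ℓ, ¬ (∀ a, ((ω.1 a : ℕ) ≤ n)) → f ω = 0) := by
  constructor
  · intro hU ω hω
    push_neg at hω
    obtain ⟨a₀, ha₀⟩ := hω
    set M : ℕ := (Finset.univ.sup fun a => (ω.1 a : ℕ)) + n with hM
    have hMa : ∀ a, (ω.1 a : ℕ) ≤ M := by
      intro a
      have : (ω.1 a : ℕ) ≤ Finset.univ.sup fun a => (ω.1 a : ℕ) :=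
        Finset.le_sup (f := fun a => ((ω.1 a : ℕ+) : ℕ)) (Finset.mem_univ a)
      omega
    have hMn : n ≤ M := Nat.le_add_left _ _
    set m : ℕ → ℕ+ := fun k => ⟨M + k + 1, Nat.succ_pos _⟩ with hm
    have hmval : ∀ k, (m k : ℕ) = M + k + 1 := fun _ => rfl
    have hmgt : ∀ k a, (ω.1 a : ℕ) < (m k : ℕ) := by
      intro k a; have := hMa a; rw [hmval]; omega
    have hmn : ∀ k, n < (m k : ℕ) := by intro k; rw [hmval]; omega
    have hinj : ∀ k, Function.Injective (fun a => if a = a₀ then m k else ω.1 a) := by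
      intro k a b hab
      simp only at hab
      by_cases ha : a = a₀ <;> by_cases hb : b = a₀
      · rw [ha, hb]
      · rw [if_pos ha, if_neg hb] at hab
        exact absurd (congrArg PNat.val hab).symm (hmgt k b).ne
      · rw [if_neg ha, if_pos hb] at hab
        exact absurd (congrArg PNat.val hab) (hmgt k a).ne
      · rw [if_neg ha, if_neg hb] at hab
        exact ω.2 hab
    set Ω : ℕ → Xinj ℓ := fun k => ⟨fun a => if a = a₀ then m k else ω.1 a, hinj k⟩ with hΩ
    have hfΩ : ∀ k, f (Ω k) = f ω := by
      intro k
      have hfin : {x : ℕ+ | Equiv.swap (ω.1 a₀) (m k) x ≠ x}.Finite := by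
        apply Set.Finite.subset ((Set.finite_singleton (m k)).insert (ω.1 a₀))
        intro x hx
        by_contra hmem
        simp only [Set.mem_insert_iff, Set.mem_singleton_iff, not_or] at hmem
        exact hx (Equiv.swap_apply_of_ne_of_ne hmem.1 hmem.2)
      have hfix : ∀ j : ℕ+, (j : ℕ) ≤ n → Equiv.swap (ω.1 a₀) (m k) j = j := by
        intro j hj
        apply Equiv.swap_apply_of_ne_of_ne
        · intro h; rw [h] at hj; omega
        · intro h; rw [h] at hj; have := hmn k; omega
      have := hU (Equiv.swap (ω.1 a₀) (m k)) hfin hfix (Ω k)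
      rw [← this]
      apply congrArg
      apply Subtype.ext
      funext a
      show (Equiv.swap (ω.1 a₀) (m k))⁻¹ ((Ω k).1 a) = ω.1 a
      rw [Equiv.swap_inv]
      by_cases ha : a = a₀
      · rw [ha]
        show Equiv.swap (ω.1 a₀) (m k) ((Ω k).1 a₀) = ω.1 a₀
        have hv : (Ω k).1 a₀ = m k := if_pos rfl
        rw [hv, Equiv.swap_apply_right]
      · show Equiv.swap (ω.1 a₀) (m k) (if a = a₀ then m k else ω.1 a) = ω.1 a
        rw [if_neg ha]
        apply Equiv.swap_apply_of_ne_of_ne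
        · exact fun h => ha (ω.2 h)
        · exact fun h => (hmgt k a).ne (by exact_mod_cast h)
    have hΩinj : Function.Injective Ω := by
      intro j k hjk
      have : (Ω j).1 a₀ = (Ω k).1 a₀ := by rw [hjk]
      simp only [hΩ, if_pos rfl] at this
      have : (m j : ℕ) = (m k : ℕ) := congrArg _ this
      rw [hmval, hmval] at this; omega
    have hsum : Summable fun k : ℕ => ‖f ω‖ ^ (2 : ENNReal).toReal := by
      have h1 := ((lp.memℓp f).summable (by norm_num)).comp_injective hΩinj
      have : (fun i => ‖f i‖ ^ (2 : ENNReal).toReal) ∘ Ω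
          = fun k : ℕ => ‖f ω‖ ^ (2 : ENNReal).toReal := by
        funext k; simp [Function.comp, hfΩ k]
      rwa [this] at h1
    have h0 : ‖f ω‖ ^ (2 : ENNReal).toReal = 0 :=
      (tendsto_nhds_unique tendsto_const_nhds hsum.tendsto_cofinite_zero)
    have : ‖f ω‖ = 0 := by
      have h2 : (2 : ENNReal).toReal = 2 := by norm_num
      rw [h2] at h0
      exact (Real.rpow_eq_zero (norm_nonneg _) (by norm_num)).mp h0
    simpa using this
  · intro hsupp g hgfin hgfix ω
    have hgfix' : ∀ j : ℕ+, (j : ℕ) ≤ n → g⁻¹ j = j := by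
      intro j hj
      exact (Equiv.Perm.inv_eq_iff_eq).mpr (hgfix j hj).symm
    by_cases hω : ∀ a, ((ω.1 a : ℕ) ≤ n)
    · have hkey : (⟨fun a => g⁻¹ (ω.1 a), (Equiv.injective g⁻¹).comp ω.2⟩ : Xinj ℓ) = ω :=
        Subtype.ext (funext fun a => hgfix' (ω.1 a) (hω a))
      rw [hkey]
    · rw [hsupp ω hω]
      apply hsupp
      intro hcon
      apply hω
      intro a
      have h1 := hcon a
      have h2 := hgfix _ h1
      rw [show g (g⁻¹ (ω.1 a)) = ω.1 a by simp] at h2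
      rw [h2]
      exact h1
end
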